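/- Consider n jobs with release times r_j, deadlines d_j, and processing durations p_j ≥ 0. There exists a schedule processing jobs one at a time (each job j processed for total time p_j, only within [r_j, d_j]) if and only if for every interval [t, t'], the sum of p_j over all jobs j with t ≤ r_j and d_j ≤ t' is at most t' − t. -/

import Mathlib

open MeasureTheory

open Set in
private lemma edf_volfin (T : Set ℝ) (a b : ℝ) : volume (T ∩ Icc a b) ≠ ⊤ :=
  ((measure_mono inter_subset_right).trans_lt measure_Icc_lt_top).ne

open Set in
private lemma edf_cont_vol (T : Set ℝ) (a : ℝ) :
    Continuous (fun x => (volume (T ∩ Icc a x)).toReal) := by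
  have key : ∀ x y : ℝ, x ≤ y →
      (volume (T ∩ Icc a x)).toReal ≤ (volume (T ∩ Icc a y)).toReal ∧
      (volume (T ∩ Icc a y)).toReal ≤ (volume (T ∩ Icc a x)).toReal + (y - x) := by
    intro x y hxy
    constructor
    · exact ENNReal.toReal_mono (edf_volfin T a y)
        (measure_mono (inter_subset_inter_right _ (Icc_subset_Icc_right hxy)))
    · have h1 : volume (T ∩ Icc a y) ≤ volume (T ∩ Icc a x) + ENNReal.ofReal (y - x) := by
        have hsub : T ∩ Icc a y ⊆ (T ∩ Icc a x) ∪ Ioc x y := by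
          rintro z ⟨hzT, hz1, hz2⟩
          rcases le_or_gt z x with h | h
          · exact Or.inl ⟨hzT, hz1, h⟩
          · exact Or.inr ⟨h, hz2⟩
        calc volume (T ∩ Icc a y) ≤ volume ((T ∩ Icc a x) ∪ Ioc x y) := measure_mono hsub
          _ ≤ volume (T ∩ Icc a x) + volume (Ioc x y) := measure_union_le _ _
          _ = volume (T ∩ Icc a x) + ENNReal.ofReal (y - x) := by rw [Real.volume_Ioc]
      have h2 := ENNReal.toReal_mono
        (by simp [ENNReal.add_ne_top, edf_volfin T a x]) h1
      rwa [ENNReal.toReal_add (edf_volfin T a x) ENNReal.ofReal_ne_top,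
        ENNReal.toReal_ofReal (by linarith)] at h2
  apply LipschitzWith.continuous (K := 1)
  apply LipschitzWith.of_dist_le_mul
  intro x y
  rw [Real.dist_eq, Real.dist_eq]
  simp only [NNReal.coe_one, one_mul]
  rcases le_total x y with h | h
  · obtain ⟨h1, h2⟩ := key x y h
    have h3 : y - x ≤ |x - y| := by rw [abs_sub_comm]; exact le_abs_self _
    rw [abs_sub_le_iff]; constructor <;> linarith
  · obtain ⟨h1, h2⟩ := key y x h
    have h3 : x - y ≤ |x - y| := le_abs_self _
    rw [abs_sub_le_iff]; constructor <;> linarith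

open Set in
private lemma edf_aux {n : ℕ} (r d p : Fin n → ℝ) (hrd : ∀ j, r j ≤ d j)
    (hp : ∀ j, 0 ≤ p j) (S : Finset (Fin n)) :
    ∀ T : Set ℝ, MeasurableSet T →
      (∀ t t' : ℝ, t ≤ t' →
        ENNReal.ofReal (∑ j ∈ S.filter (fun j => t ≤ r j ∧ d j ≤ t'), p j)
          ≤ volume (T ∩ Icc t t')) →
      ∃ A : Fin n → Set ℝ,
        (∀ j, MeasurableSet (A j)) ∧ (∀ j, A j ⊆ T) ∧
        (∀ i ∈ S, ∀ j ∈ S, i ≠ j → Disjoint (A i) (A j)) ∧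
        (∀ j ∈ S, A j ⊆ Icc (r j) (d j)) ∧
        (∀ j ∈ S, volume (A j) = ENNReal.ofReal (p j)) ∧
        (∀ j ∉ S, A j = ∅) := by
  induction S using Finset.strongInduction with
  | _ S ih =>
    intro T hT H
    rcases S.eq_empty_or_nonempty with rfl | hS
    · exact ⟨fun _ => ∅, fun _ => MeasurableSet.empty, fun _ => empty_subset T,
        by simp, by simp, by simp, fun _ _ => rfl⟩
    obtain ⟨j0, hj0S, hj0min⟩ := S.exists_min_image d hS
    -- step 1: IVT to find the earliest chunk of T ∩ [r j0, ⋅] of measure p j0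
    have hp0sum : p j0 ≤ ∑ j ∈ S.filter (fun j => r j0 ≤ r j ∧ d j ≤ d j0), p j :=
      Finset.single_le_sum (fun i _ => hp i)
        (Finset.mem_filter.mpr ⟨hj0S, le_refl _, le_refl _⟩)
    have hvol0 : ENNReal.ofReal (p j0) ≤ volume (T ∩ Icc (r j0) (d j0)) :=
      le_trans (ENNReal.ofReal_le_ofReal hp0sum) (H _ _ (hrd j0))
    have hga : (volume (T ∩ Icc (r j0) (r j0))).toReal = 0 := by
      have h0 : volume (T ∩ Icc (r j0) (r j0)) = 0 := by
        refine le_antisymm ?_ zero_le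
        have := measure_mono (μ := volume) (inter_subset_right (s := T)
          (t := Icc (r j0) (r j0)))
        simpa [Real.volume_Icc, sub_self] using this
      rw [h0, ENNReal.toReal_zero]
    have hgb : p j0 ≤ (volume (T ∩ Icc (r j0) (d j0))).toReal := by
      have := ENNReal.toReal_mono (edf_volfin T (r j0) (d j0)) hvol0
      rwa [ENNReal.toReal_ofReal (hp j0)] at this
    have hmem : p j0 ∈ Icc ((volume (T ∩ Icc (r j0) (r j0))).toReal)
        ((volume (T ∩ Icc (r j0) (d j0))).toReal) :=
      ⟨by rw [hga]; exact hp j0, hgb⟩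
    obtain ⟨x, hx, hgx⟩ := intermediate_value_Icc (hrd j0)
      (edf_cont_vol T (r j0)).continuousOn hmem
    have hA0vol : volume (T ∩ Icc (r j0) x) = ENNReal.ofReal (p j0) := by
      rw [← hgx, ENNReal.ofReal_toReal (edf_volfin T (r j0) x)]
    set T' := T \ Icc (r j0) x with hT'def
    have hT'm : MeasurableSet T' := hT.diff measurableSet_Icc
    have hp0top : ENNReal.ofReal (p j0) ≠ ⊤ := ENNReal.ofReal_ne_top
    -- step 2: the Hall condition survives removal of the scheduled chunk
    have H' : ∀ t t' : ℝ, t ≤ t' →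
        ENNReal.ofReal (∑ j ∈ (S.erase j0).filter (fun j => t ≤ r j ∧ d j ≤ t'), p j)
          ≤ volume (T' ∩ Icc t t') := by
      intro t t' htt'
      rcases ((S.erase j0).filter (fun j => t ≤ r j ∧ d j ≤ t')).eq_empty_or_nonempty
        with hF | ⟨j1, hj1⟩
      · rw [hF]; simp
      · simp only [Finset.mem_filter, Finset.mem_erase] at hj1
        obtain ⟨⟨hj1ne, hj1S⟩, hj1r, hj1d⟩ := hj1
        have hbt' : d j0 ≤ t' := (hj0min j1 hj1S).trans hj1d
        have hxt' : x ≤ t' := hx.2.trans hbt'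
        rcases le_or_gt t (r j0) with hta | hta
        · -- case t ≤ r j0 : whole chunk lies inside [t, t']
          have hsub : T ∩ Icc (r j0) x ⊆ T ∩ Icc t t' :=
            inter_subset_inter_right _ (Icc_subset_Icc hta hxt')
          have hTeq : T' ∩ Icc t t' = (T ∩ Icc t t') \ (T ∩ Icc (r j0) x) := by
            ext z; simp only [hT'def, mem_diff, mem_inter_iff]; tauto
          have hkey : volume (T' ∩ Icc t t') + ENNReal.ofReal (p j0)
              = volume (T ∩ Icc t t') := by
            rw [hTeq, ← hA0vol, add_comm]
            calc volume (T ∩ Icc (r j0) x)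
                  + volume ((T ∩ Icc t t') \ (T ∩ Icc (r j0) x))
                = volume ((T ∩ Icc (r j0) x) ∪ (T ∩ Icc t t')) :=
                  measure_add_diff (hT.inter measurableSet_Icc).nullMeasurableSet _
              _ = volume (T ∩ Icc t t') := by rw [union_eq_right.mpr hsub]
          have hj0F : j0 ∈ S.filter (fun j => t ≤ r j ∧ d j ≤ t') :=
            Finset.mem_filter.mpr ⟨hj0S, hta, hbt'⟩
          have hsum : (∑ j ∈ (S.erase j0).filter (fun j => t ≤ r j ∧ d j ≤ t'), p j)
              + p j0 = ∑ j ∈ S.filter (fun j => t ≤ r j ∧ d j ≤ t'), p j := by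
            rw [Finset.filter_erase, Finset.sum_erase_add _ _ hj0F]
          have hle := H t t' htt'
          rw [← hsum, ENNReal.ofReal_add (Finset.sum_nonneg fun i _ => hp i) (hp j0),
            ← hkey] at hle
          exact (ENNReal.add_le_add_iff_right hp0top).mp hle
        · rcases lt_or_ge x t with hxt | htx
          · -- chunk entirely left of [t, t']
            have hTeq : T' ∩ Icc t t' = T ∩ Icc t t' := by
              ext z
              simp only [hT'def, mem_diff, mem_inter_iff, mem_Icc]
              constructor
              · rintro ⟨⟨hzT, _⟩, hz⟩; exact ⟨hzT, hz⟩
              · rintro ⟨hzT, hz1, hz2⟩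
                exact ⟨⟨hzT, fun hc => absurd hc.2 (by linarith)⟩, hz1, hz2⟩
            rw [hTeq]
            refine le_trans (ENNReal.ofReal_le_ofReal ?_) (H t t' htt')
            refine Finset.sum_le_sum_of_subset_of_nonneg ?_ (fun i _ _ => hp i)
            rw [Finset.filter_erase]; exact Finset.erase_subset _ _
          · -- r j0 < t ≤ x : compare to interval [r j0, t']
            have hsub1 : (S.erase j0).filter (fun j => t ≤ r j ∧ d j ≤ t')
                ⊆ (S.filter (fun j => r j0 ≤ r j ∧ d j ≤ t')).erase j0 := by
              intro j hj
              simp only [Finset.mem_filter, Finset.mem_erase] at hj ⊢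
              exact ⟨hj.1.1, hj.1.2, le_trans hta.le hj.2.1, hj.2.2⟩
            have hj0G : j0 ∈ S.filter (fun j => r j0 ≤ r j ∧ d j ≤ t') :=
              Finset.mem_filter.mpr ⟨hj0S, le_refl _, hbt'⟩
            have hsum1 : (∑ j ∈ (S.erase j0).filter (fun j => t ≤ r j ∧ d j ≤ t'), p j)
                + p j0 ≤ ∑ j ∈ S.filter (fun j => r j0 ≤ r j ∧ d j ≤ t'), p j := by
              rw [← Finset.sum_erase_add _ _ hj0G]
              exact add_le_add_left
                (Finset.sum_le_sum_of_subset_of_nonneg hsub1 fun i _ _ => hp i) _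
            have hm1 : volume (T ∩ Icc (r j0) t')
                ≤ volume (T ∩ Icc (r j0) t) + volume (T ∩ Ioc t t') := by
              refine le_trans (measure_mono ?_) (measure_union_le _ _)
              rintro z ⟨hzT, hz1, hz2⟩
              rcases le_or_gt z t with h | h
              · exact Or.inl ⟨hzT, hz1, h⟩
              · exact Or.inr ⟨hzT, h, hz2⟩
            have hm2 : volume (T ∩ Ioc t t')
                ≤ volume (T ∩ Ioc t x) + volume (T' ∩ Icc t t') := by
              refine le_trans (measure_mono ?_) (measure_union_le _ _)
              rintro z ⟨hzT, hz1, hz2⟩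
              rcases le_or_gt z x with h | h
              · exact Or.inl ⟨hzT, hz1, h⟩
              · exact Or.inr ⟨⟨hzT, fun hc => absurd hc.2 (not_le.mpr h)⟩, hz1.le, hz2⟩
            have hm3 : volume (T ∩ Icc (r j0) t) + volume (T ∩ Ioc t x)
                = ENNReal.ofReal (p j0) := by
              rw [← hA0vol, ← measure_union ?disj (hT.inter measurableSet_Ioc)]
              · congr 1
                rw [← inter_union_distrib_left]
                congr 1
                exact Icc_union_Ioc_eq_Icc hta.le htx
              case disj =>
                exact Set.disjoint_left.mpr fun z hz1 hz2 =>
                  absurd hz2.2.1 (not_lt.mpr hz1.2.2)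
            have hchain : ENNReal.ofReal
                (∑ j ∈ (S.erase j0).filter (fun j => t ≤ r j ∧ d j ≤ t'), p j)
                + ENNReal.ofReal (p j0)
                ≤ volume (T' ∩ Icc t t') + ENNReal.ofReal (p j0) := by
              calc ENNReal.ofReal
                    (∑ j ∈ (S.erase j0).filter (fun j => t ≤ r j ∧ d j ≤ t'), p j)
                    + ENNReal.ofReal (p j0)
                  = ENNReal.ofReal
                    ((∑ j ∈ (S.erase j0).filter (fun j => t ≤ r j ∧ d j ≤ t'), p j)
                      + p j0) :=
                    (ENNReal.ofReal_add (Finset.sum_nonneg fun i _ => hp i) (hp j0)).symm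
                _ ≤ ENNReal.ofReal (∑ j ∈ S.filter (fun j => r j0 ≤ r j ∧ d j ≤ t'), p j) :=
                    ENNReal.ofReal_le_ofReal hsum1
                _ ≤ volume (T ∩ Icc (r j0) t') := H _ _ (hta.le.trans htt')
                _ ≤ volume (T ∩ Icc (r j0) t) + volume (T ∩ Ioc t t') := hm1
                _ ≤ volume (T ∩ Icc (r j0) t)
                    + (volume (T ∩ Ioc t x) + volume (T' ∩ Icc t t')) :=
                    add_le_add_right hm2 _
                _ = ENNReal.ofReal (p j0) + volume (T' ∩ Icc t t') := by
                    rw [← add_assoc, hm3]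
                _ = volume (T' ∩ Icc t t') + ENNReal.ofReal (p j0) := add_comm _ _
            exact (ENNReal.add_le_add_iff_right hp0top).mp hchain
    -- step 3: induct on the remaining jobs
    obtain ⟨A', hA'm, hA'T, hA'disj, hA'sub, hA'vol, hA'empty⟩ :=
      ih (S.erase j0) (Finset.erase_ssubset hj0S) T' hT'm H'
    refine ⟨fun j => if j = j0 then T ∩ Icc (r j0) x else A' j, ?_, ?_, ?_, ?_, ?_, ?_⟩
    · intro j
      by_cases h : j = j0
      · simp only [h, if_pos rfl]; exact hT.inter measurableSet_Icc
      · simp only [if_neg h]; exact hA'm j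
    · intro j
      by_cases h : j = j0
      · simp only [h, if_pos rfl]; exact inter_subset_left
      · simp only [if_neg h]; exact (hA'T j).trans diff_subset
    · intro i hi j hj hij
      by_cases hi0 : i = j0 <;> by_cases hj0' : j = j0
      · exact absurd (hi0.trans hj0'.symm) hij
      · simp only [hi0, if_pos rfl, if_neg hj0']
        exact Set.disjoint_left.mpr fun z hz1 hz2 => (hA'T j hz2).2 hz1.2
      · simp only [hj0', if_pos rfl, if_neg hi0]
        exact Set.disjoint_right.mpr fun z hz1 hz2 => (hA'T i hz2).2 hz1.2
      · simp only [if_neg hi0, if_neg hj0']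
        exact hA'disj i (Finset.mem_erase.mpr ⟨hi0, hi⟩) j
          (Finset.mem_erase.mpr ⟨hj0', hj⟩) hij
    · intro j hj
      by_cases h : j = j0
      · subst h
        simp only [if_pos rfl]
        exact inter_subset_right.trans (Icc_subset_Icc_right hx.2)
      · simp only [if_neg h]
        exact hA'sub j (Finset.mem_erase.mpr ⟨h, hj⟩)
    · intro j hj
      by_cases h : j = j0
      · subst h; simp only [if_pos rfl]; exact hA0vol
      · simp only [if_neg h]; exact hA'vol j (Finset.mem_erase.mpr ⟨h, hj⟩)
    · intro j hj
      have h : j ≠ j0 := fun hc => hj (hc ▸ hj0S)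
      simp only [if_neg h]
      exact hA'empty j (fun hc => hj (Finset.mem_of_mem_erase hc))

/-- A feasibility characterization for single-machine preemptive scheduling:
jobs are processed one at a time (pairwise disjoint processing sets),
job `j` is processed only within `[r j, d j]` for total time `p j`. -/
theorem edf_feasibility_iff_hall
    (n : ℕ) (r d p : Fin n → ℝ)
    (hrd : ∀ j, r j ≤ d j) (hp : ∀ j, 0 ≤ p j) :
    (∃ A : Fin n → Set ℝ,
        (∀ j, MeasurableSet (A j)) ∧
        (Pairwise (Function.onFun Disjoint A)) ∧
        (∀ j, A j ⊆ Set.Icc (r j) (d j)) ∧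
        (∀ j, volume (A j) = ENNReal.ofReal (p j))) ↔
      ∀ t t' : ℝ, t ≤ t' →
        (∑ j ∈ Finset.univ.filter (fun j => t ≤ r j ∧ d j ≤ t'), p j) ≤ t' - t := by
  constructor
  · rintro ⟨A, hAm, hAdisj, hAsub, hAvol⟩ t t' htt'
    set F := Finset.univ.filter (fun j => t ≤ r j ∧ d j ≤ t') with hF
    have h1 : ∀ j ∈ F, A j ⊆ Set.Icc t t' := by
      intro j hj
      simp only [hF, Finset.mem_filter] at hj
      exact (hAsub j).trans (Set.Icc_subset_Icc hj.2.1 hj.2.2)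
    have h2 : volume (⋃ j ∈ F, A j) = ∑ j ∈ F, volume (A j) :=
      measure_biUnion_finset (fun i _ j _ hij => hAdisj hij) (fun j _ => hAm j)
    have h4 : ∑ j ∈ F, ENNReal.ofReal (p j) ≤ ENNReal.ofReal (t' - t) := by
      calc ∑ j ∈ F, ENNReal.ofReal (p j) = ∑ j ∈ F, volume (A j) := by
            exact Finset.sum_congr rfl fun j _ => (hAvol j).symm
        _ = volume (⋃ j ∈ F, A j) := h2.symm
        _ ≤ volume (Set.Icc t t') := measure_mono (Set.iUnion₂_subset h1)
        _ = ENNReal.ofReal (t' - t) := Real.volume_Icc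
    rw [← ENNReal.ofReal_sum_of_nonneg (fun j _ => hp j)] at h4
    exact (ENNReal.ofReal_le_ofReal_iff (by linarith)).mp h4
  · intro H
    have H' : ∀ t t' : ℝ, t ≤ t' →
        ENNReal.ofReal (∑ j ∈ Finset.univ.filter (fun j => t ≤ r j ∧ d j ≤ t'), p j)
          ≤ volume ((Set.univ : Set ℝ) ∩ Set.Icc t t') := by
      intro t t' h
      rw [Set.univ_inter, Real.volume_Icc]
      exact ENNReal.ofReal_le_ofReal (H t t' h)
    obtain ⟨A, h1, h2, h3, h4, h5, h6⟩ :=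
      edf_aux r d p hrd hp Finset.univ Set.univ MeasurableSet.univ H'
    exact ⟨A, h1, fun i j hij => h3 i (Finset.mem_univ i) j (Finset.mem_univ j) hij,
      fun j => h4 j (Finset.mem_univ j), fun j => h5 j (Finset.mem_univ j)⟩
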